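/- Suppose that for all (r,t) ∈ ℝ × [0,T] one has H(r,t) ≠ 0, G(r,t) < 0, E_H(r,t) = 0 and E_G(r,t) = 0. Then for every x ∈ ℝ, y > 0, r ∈ ℝ, t ∈ [0,T], with π* and η̄ := η*(π*) = -λ(r) - σ̄(r)·H_r(r,t)/H(r,t) evaluated at (x,y,r,t): (i) Λ^{π*,η}(x,y,r,t) ≤ 0 for all η ∈ ℝ; (ii) Λ^{π,η̄}(x,y,r,t) = 0 for all π ∈ ℝ (in particular Λ^{π,η̄} ≥ 0); (iii) Λ^{π*,η̄}(x,y,r,t) = 0. Thus (π*, η̄) is a pointwise saddle point of the Isaacs expression. -/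

import Mathlib

/- STATEMENT 5: If H ≠ 0, G < 0, E_H = 0 and E_G = 0 on ℝ × [0,T], then for every
x ∈ ℝ, y > 0, r ∈ ℝ, t ∈ [0,T], with π* and η̄ = η*(π*) = -λ(r) - σ̄(r)H_r/H evaluated
at (x,y,r,t): (i) Λ^{π*,η} ≤ 0 for all η; (ii) Λ^{π,η̄} = 0 for all π; (iii) Λ^{π*,η̄} = 0.
Thus (π*, η̄) is a pointwise saddle point of the Isaacs expression. -/

private lemma stmt5_alg1 (h g ht hr hrr gt gr grr l m s sg x y r π : ℝ)
    (hh : h ≠ 0) (hg : g ≠ 0) (hs : s ≠ 0)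
    (EH : ht + r * h + (m - sg * l) * hr + (1/2) * sg^2 * hrr - sg^2 * hr^2 / h = 0)
    (EG : gt + (1/2)*sg^2*grr + (l + sg*hr/h)^2*g + (m - 2*sg*l - 2*sg^2*hr/h)*gr = 0) :
    x * ht + y * gt + (π * s * (l + (-l - sg*hr/h)) + r*x) * h + (-l - sg*hr/h)^2 * y * g
      + (m + sg * (-l - sg*hr/h)) * (x*hr + y*gr) + (1/2)*sg^2*(x*hrr + y*grr)
      + π * s * sg * hr + (-l - sg*hr/h) * sg * y * gr = 0 := by
  have EH' : (ht + r * h + (m - sg * l) * hr + (1/2) * sg^2 * hrr) * h - sg^2 * hr^2 = 0 := by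
    field_simp at EH; linarith
  have EG2 : ((gt + (1/2)*sg^2*grr + m*gr - 2*sg*l*gr) * h^2 + (l*h + sg*hr)^2 * g
      - 2*sg^2*hr*gr*h) * (2*h) = 0 := by
    field_simp at EG; linear_combination h * EG
  have EG' : (gt + (1/2)*sg^2*grr + m*gr - 2*sg*l*gr) * h^2 + (l*h + sg*hr)^2 * g
      - 2*sg^2*hr*gr*h = 0 :=
    (mul_eq_zero.mp EG2).resolve_right (by simp [hh])
  field_simp
  linear_combination 2*h*x*EH' + 2*y*EG'

private lemma stmt5_alg2 (h g ht hr hrr gt gr grr l m s sg x y r η : ℝ)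
    (hh : h ≠ 0) (hg : g ≠ 0) (hs : s ≠ 0)
    (EH : ht + r * h + (m - sg * l) * hr + (1/2) * sg^2 * hrr - sg^2 * hr^2 / h = 0)
    (EG : gt + (1/2)*sg^2*grr + (l + sg*hr/h)^2*g + (m - 2*sg*l - 2*sg^2*hr/h)*gr = 0) :
    x * ht + y * gt + ((2*y*g*(l/(s*h) + (sg/s)*(hr/h^2 - gr/(g*h))) - x*(sg/s)*(hr/h)) * s * (l + η) + r*x) * h
      + η^2 * y * g
      + (m + sg * η) * (x*hr + y*gr) + (1/2)*sg^2*(x*hrr + y*grr)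
      + (2*y*g*(l/(s*h) + (sg/s)*(hr/h^2 - gr/(g*h))) - x*(sg/s)*(hr/h)) * s * sg * hr + η * sg * y * gr
      = y * g * (η - (-l - sg*hr/h))^2 := by
  have EH' : (ht + r * h + (m - sg * l) * hr + (1/2) * sg^2 * hrr) * h - sg^2 * hr^2 = 0 := by
    field_simp at EH; linarith
  have EG2 : ((gt + (1/2)*sg^2*grr + m*gr - 2*sg*l*gr) * h^2 + (l*h + sg*hr)^2 * g
      - 2*sg^2*hr*gr*h) * (2*h) = 0 := by
    field_simp at EG; linear_combination h * EG
  have EG' : (gt + (1/2)*sg^2*grr + m*gr - 2*sg*l*gr) * h^2 + (l*h + sg*hr)^2 * g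
      - 2*sg^2*hr*gr*h = 0 :=
    (mul_eq_zero.mp EG2).resolve_right (by simp [hh])
  field_simp
  linear_combination 2*h*x*EH' + 2*y*EG'

theorem stmt_5
    (T : ℝ) (hT : 0 < T)
    (H G Ht Hr Hrr Gt Gr Grr : ℝ → ℝ → ℝ)
    (lam mubar sigbar : ℝ → ℝ) (sig : ℝ → ℝ → ℝ)
    (hlam : Continuous lam) (hmubar : Continuous mubar) (hsigbar : Continuous sigbar)
    (hsig : Continuous fun p : ℝ × ℝ => sig p.1 p.2)
    (hsigpos : ∀ r t, 0 < sig r t)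
    (hHt : ∀ r t, HasDerivAt (fun s => H r s) (Ht r t) t)
    (hHr : ∀ r t, HasDerivAt (fun p => H p t) (Hr r t) r)
    (hHrr : ∀ r t, HasDerivAt (fun p => Hr p t) (Hrr r t) r)
    (hGt : ∀ r t, HasDerivAt (fun s => G r s) (Gt r t) t)
    (hGr : ∀ r t, HasDerivAt (fun p => G p t) (Gr r t) r)
    (hGrr : ∀ r t, HasDerivAt (fun p => Gr p t) (Grr r t) r)
    (Lam : ℝ → ℝ → ℝ → ℝ → ℝ → ℝ → ℝ)
    (hLam : ∀ π η x y r t : ℝ, Lam π η x y r t =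
      x * Ht r t + y * Gt r t + (π * sig r t * (lam r + η) + r * x) * H r t
        + η ^ 2 * y * G r t + (mubar r + sigbar r * η) * (x * Hr r t + y * Gr r t)
        + (1 / 2) * (sigbar r) ^ 2 * (x * Hrr r t + y * Grr r t)
        + π * sig r t * sigbar r * Hr r t + η * sigbar r * y * Gr r t)
    (pistar : ℝ → ℝ → ℝ → ℝ → ℝ)
    (hpistar : ∀ x y r t : ℝ, pistar x y r t =
      2 * y * G r t * (lam r / (sig r t * H r t)
          + (sigbar r / sig r t) * (Hr r t / (H r t) ^ 2 - Gr r t / (G r t * H r t)))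
        - x * (sigbar r / sig r t) * (Hr r t / H r t))
    (etabar : ℝ → ℝ → ℝ)
    (hetabar : ∀ r t : ℝ, etabar r t = -lam r - sigbar r * Hr r t / H r t)
    (hHne : ∀ r : ℝ, ∀ t ∈ Set.Icc (0 : ℝ) T, H r t ≠ 0)
    (hGneg : ∀ r : ℝ, ∀ t ∈ Set.Icc (0 : ℝ) T, G r t < 0)
    (hEH : ∀ r : ℝ, ∀ t ∈ Set.Icc (0 : ℝ) T,
      Ht r t + r * H r t + (mubar r - sigbar r * lam r) * Hr r t
        + (1 / 2) * (sigbar r) ^ 2 * Hrr r t - (sigbar r) ^ 2 * (Hr r t) ^ 2 / H r t = 0)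
    (hEG : ∀ r : ℝ, ∀ t ∈ Set.Icc (0 : ℝ) T,
      Gt r t + (1 / 2) * (sigbar r) ^ 2 * Grr r t
        + (lam r + sigbar r * Hr r t / H r t) ^ 2 * G r t
        + (mubar r - 2 * sigbar r * lam r - 2 * (sigbar r) ^ 2 * Hr r t / H r t) * Gr r t
        = 0) :
    ∀ x y r : ℝ, 0 < y → ∀ t ∈ Set.Icc (0 : ℝ) T,
      (∀ η : ℝ, Lam (pistar x y r t) η x y r t ≤ 0) ∧
      (∀ π : ℝ, Lam π (etabar r t) x y r t = 0) ∧
      Lam (pistar x y r t) (etabar r t) x y r t = 0 := by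
  intro x y r hy t ht
  have hH : H r t ≠ 0 := hHne r t ht
  have hGlt : G r t < 0 := hGneg r t ht
  have hGne : G r t ≠ 0 := ne_of_lt hGlt
  have hs : sig r t ≠ 0 := ne_of_gt (hsigpos r t)
  have EH := hEH r t ht
  have EG := hEG r t ht
  have key2 : ∀ π : ℝ, Lam π (etabar r t) x y r t = 0 := by
    intro π
    rw [hLam, hetabar]
    exact stmt5_alg1 (H r t) (G r t) (Ht r t) (Hr r t) (Hrr r t) (Gt r t) (Gr r t)
      (Grr r t) (lam r) (mubar r) (sig r t) (sigbar r) x y r π hH hGne hs EH EG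
  have key1 : ∀ η : ℝ, Lam (pistar x y r t) η x y r t
      = y * G r t * (η - (-lam r - sigbar r * Hr r t / H r t))^2 := by
    intro η
    rw [hLam, hpistar]
    exact stmt5_alg2 (H r t) (G r t) (Ht r t) (Hr r t) (Hrr r t) (Gt r t) (Gr r t)
      (Grr r t) (lam r) (mubar r) (sig r t) (sigbar r) x y r η hH hGne hs EH EG
  refine ⟨fun η => ?_, key2, key2 _⟩
  rw [key1]
  exact mul_nonpos_of_nonpos_of_nonneg
    (le_of_lt (mul_neg_of_pos_of_neg hy hGlt)) (sq_nonneg _)
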